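/- Let λ_1 ≥ λ_2 ≥ … ≥ λ_k ≥ 0 be integers and set L_j = λ_j + k − j for 1 ≤ j ≤ k. Let C_λ = {(i,j) ∈ ℤ² : 1 ≤ i ≤ k, −(k−i) ≤ j ≤ λ_i} and let F = {(i,j) ∈ C_λ : j > −(k−i)} be the set of non-leftmost (free) cells. Fix real numbers 0 ≤ x_1 ≤ x_2 ≤ … ≤ x_k ≤ 1. Then the Lebesgue measure, in ℝ^F, of the set of functions y : F → ℝ such that the extension Y : C_λ → ℝ defined by Y(i,j) = y(i,j) for (i,j) ∈ F and Y(i, −(k−i)) = x_{k+1−i} for 1 ≤ i ≤ k satisfies 0 ≤ Y(i,j) ≤ 1 for all cells, Y(i,j) ≥ Y(i+1,j) whenever both (i,j) and (i+1,j) lie in C_λ, and Y(i,j) ≥ Y(i,j+1) whenever both (i,j) and (i,j+1) lie in C_λ, equals (1/∏_{j=1}^k L_j!) · det( x_{k+1−i}^{L_j} )_{1≤i,j≤k} (equivalently (−1)^{k(k−1)/2} det( x_i^{L_j} )_{i,j} / ∏_j L_j!). -/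

import Mathlib

open MeasureTheory

/-- The cells of the diagram obtained by leaning the Young diagram
`λ = (lam 0 ≥ lam 1 ≥ … ≥ lam (k−1))` against a staircase of order `k`
(rows indexed `0, …, k−1`, i.e. `1, …, k` shifted down by one): row `i`
consists of the cells `(i, j)` with `−(k−1−i) ≤ j ≤ lam i`. -/
noncomputable def cellsOf (k : ℕ) (lam : Fin k → ℕ) : Finset (Fin k × ℤ) :=
  (Finset.univ ×ˢ Finset.Icc (-(k : ℤ)) ((Finset.univ.sup lam : ℕ) : ℤ)).filter
    (fun c => -((k : ℤ) - 1 - (c.1 : ℤ)) ≤ c.2 ∧ c.2 ≤ (lam c.1 : ℤ))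

/-- The free (non-leftmost) cells: those strictly to the right of the
diagonal cell `(i, −(k−1−i))` of their row. -/
noncomputable def freeCells (k : ℕ) (lam : Fin k → ℕ) : Finset (Fin k × ℤ) :=
  (cellsOf k lam).filter (fun c => -((k : ℤ) - 1 - (c.1 : ℤ)) < c.2)

/-- Extend a function `y` on free cells to all cells by assigning the value
`x (k−1−i)` to the diagonal (leftmost) cell of row `i`. -/
noncomputable def extendDiag (k : ℕ) (lam : Fin k → ℕ) (x : Fin k → ℝ)
    (y : {c : Fin k × ℤ // c ∈ freeCells k lam} → ℝ) : Fin k × ℤ → ℝ :=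
  fun c => if h : c ∈ freeCells k lam then y ⟨c, h⟩ else x (Fin.rev c.1)

/-- The generalized polytope: chains indexed by `Fin r`, chain `i` has `n i` free cells
with start value `b i`. -/
def glSet (r : ℕ) (n : Fin r → ℕ) (b : Fin r → ℝ) : Set ((Σ i : Fin r, Fin (n i)) → ℝ) :=
  {y | (∀ c, 0 ≤ y c) ∧
       (∀ (i : Fin r) (h : 0 < n i), y ⟨i, ⟨0, h⟩⟩ ≤ b i) ∧
       (∀ (i : Fin r) (q : ℕ) (h : q + 1 < n i),
          y ⟨i, ⟨q + 1, h⟩⟩ ≤ y ⟨i, ⟨q, Nat.lt_of_succ_lt h⟩⟩) ∧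
       (∀ (i : ℕ) (h : i + 1 < r) (h0 : 0 < n ⟨i, Nat.lt_of_succ_lt h⟩),
          b ⟨i + 1, h⟩ ≤ y ⟨⟨i, Nat.lt_of_succ_lt h⟩, ⟨0, h0⟩⟩) ∧
       (∀ (i : ℕ) (h : i + 1 < r) (q : ℕ) (h1 : q + 1 < n ⟨i, Nat.lt_of_succ_lt h⟩)
          (h2 : q < n ⟨i + 1, h⟩),
          y ⟨⟨i + 1, h⟩, ⟨q, h2⟩⟩ ≤ y ⟨⟨i, Nat.lt_of_succ_lt h⟩, ⟨q + 1, h1⟩⟩)}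

lemma isClosed_glSet (r : ℕ) (n : Fin r → ℕ) (b : Fin r → ℝ) : IsClosed (glSet r n b) := by
  unfold glSet
  simp only [Set.setOf_and, Set.setOf_forall]
  repeat'
    first
    | apply IsClosed.inter
    | apply isClosed_iInter
    | intro _
  all_goals exact isClosed_le (by fun_prop) (by fun_prop)

lemma measurableSet_glSet (r : ℕ) (n : Fin r → ℕ) (b : Fin r → ℝ) :
    MeasurableSet (glSet r n b) := (isClosed_glSet r n b).measurableSet

/-- In `glSet`, every value of chain `i` is at most `b i`. -/
lemma glSet_le_b {r : ℕ} {n : Fin r → ℕ} {b : Fin r → ℝ}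
    {y : (Σ i : Fin r, Fin (n i)) → ℝ} (hy : y ∈ glSet r n b)
    (i : Fin r) (q : ℕ) (h : q < n i) : y ⟨i, ⟨q, h⟩⟩ ≤ b i := by
  induction q with
  | zero => exact hy.2.1 i h
  | succ p ih => exact le_trans (hy.2.2.1 i p h) (ih (Nat.lt_of_succ_lt h))

section Peel
variable {r r' : ℕ} {n : Fin r → ℕ} {n' : Fin r' → ℕ} (hr' : r' ≤ r)
  (hchar : ∀ i : Fin r, 0 < n i ↔ (i : ℕ) < r')
  (hn' : ∀ i : Fin r', n' i + 1 = n (Fin.castLE hr' i))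

def peelEquiv : (Fin r' ⊕ (Σ i : Fin r', Fin (n' i))) ≃ (Σ i : Fin r, Fin (n i)) where
  toFun s := match s with
    | .inl i => ⟨Fin.castLE hr' i, ⟨0, by rw [← hn' i]; omega⟩⟩
    | .inr ⟨i, q⟩ => ⟨Fin.castLE hr' i, ⟨(q : ℕ) + 1, by have := hn' i; have := q.2; omega⟩⟩
  invFun c :=
    have hpos : (c.1 : ℕ) < r' := (hchar c.1).1 (Nat.lt_of_le_of_lt (Nat.zero_le _) c.2.2)
    if h : (c.2 : ℕ) = 0 then .inl ⟨c.1, hpos⟩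
    else .inr ⟨⟨c.1, hpos⟩, ⟨(c.2 : ℕ) - 1, by
      have h1 := hn' ⟨c.1, hpos⟩
      have h2 := c.2.2
      simp only [Fin.castLE_mk, Fin.eta] at h1
      omega⟩⟩
  left_inv s := by
    rcases s with i | ⟨i, q⟩
    · simp
    · simp
  right_inv c := by
    rcases c with ⟨i, q⟩
    by_cases h : (q : ℕ) = 0
    · simp only [h, dif_pos]
      congr 1 <;> simp [Fin.ext_iff, h]
    · simp only [dif_neg h]
      congr 1 <;> simp [Fin.ext_iff, Nat.succ_pred_eq_of_pos (Nat.pos_of_ne_zero h)] <;> omega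

end Peel

section PeelMap
variable {r r' : ℕ} {n : Fin r → ℕ} {n' : Fin r' → ℕ} (hr' : r' ≤ r)
  (hchar : ∀ i : Fin r, 0 < n i ↔ (i : ℕ) < r')
  (hn' : ∀ i : Fin r', n' i + 1 = n (Fin.castLE hr' i))

noncomputable def peelMap :
    ((Fin r' → ℝ) × ((Σ i : Fin r', Fin (n' i)) → ℝ)) → ((Σ i : Fin r, Fin (n i)) → ℝ) :=
  (MeasurableEquiv.piCongrLeft (fun _ => ℝ) (peelEquiv hr' hchar hn')) ∘
    (MeasurableEquiv.sumPiEquivProdPi (fun _ => ℝ)).symm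

lemma peelMap_measurePreserving : MeasurePreserving (peelMap hr' hchar hn') volume volume :=
  (volume_measurePreserving_piCongrLeft (fun _ => ℝ) (peelEquiv hr' hchar hn')).comp
    (volume_measurePreserving_sumPiEquivProdPi_symm (fun _ => ℝ))

lemma peelMap_apply_inl (t : Fin r' → ℝ) (z : (Σ i : Fin r', Fin (n' i)) → ℝ) (i : Fin r') :
    peelMap hr' hchar hn' (t, z) (peelEquiv hr' hchar hn' (.inl i)) = t i := by
  simpa [peelMap, MeasurableEquiv.coe_piCongrLeft, MeasurableEquiv.coe_sumPiEquivProdPi_symm]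
    using Equiv.piCongrLeft_sum_inl (fun _ => ℝ) (peelEquiv hr' hchar hn') t z i

lemma peelMap_apply_inr (t : Fin r' → ℝ) (z : (Σ i : Fin r', Fin (n' i)) → ℝ)
    (c : Σ i : Fin r', Fin (n' i)) :
    peelMap hr' hchar hn' (t, z) (peelEquiv hr' hchar hn' (.inr c)) = z c := by
  simpa [peelMap, MeasurableEquiv.coe_piCongrLeft, MeasurableEquiv.coe_sumPiEquivProdPi_symm]
    using Equiv.piCongrLeft_sum_inr (fun _ => ℝ) (peelEquiv hr' hchar hn') t z c

end PeelMap

/-- Lower bounds for the peeled first-cell values. -/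
noncomputable def lbF (r' : ℕ) {r : ℕ} (b : Fin r → ℝ) (i : Fin r') : ℝ :=
  if h : (i : ℕ) + 1 < r then b ⟨(i : ℕ) + 1, h⟩ else 0

section Mem
variable {r r' : ℕ} {n : Fin r → ℕ} {n' : Fin r' → ℕ} (hr' : r' ≤ r)
  (hchar : ∀ i : Fin r, 0 < n i ↔ (i : ℕ) < r')
  (hn' : ∀ i : Fin r', n' i + 1 = n (Fin.castLE hr' i))
  (b : Fin r → ℝ) (hb0 : ∀ i, 0 ≤ b i)

lemma peelMap_mem_iff (hb0 : ∀ i, 0 ≤ b i) (t : Fin r' → ℝ) (z : (Σ i : Fin r', Fin (n' i)) → ℝ) :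
    peelMap hr' hchar hn' (t, z) ∈ glSet r n b ↔
      ((∀ i : Fin r', lbF r' b i ≤ t i ∧ t i ≤ b (Fin.castLE hr' i)) ∧ z ∈ glSet r' n' t) := by
  set Y := peelMap hr' hchar hn' (t, z) with hYdef
  have hY0 : ∀ (i : Fin r) (hlt : (i : ℕ) < r') (h0 : 0 < n i),
      Y ⟨i, ⟨0, h0⟩⟩ = t ⟨(i : ℕ), hlt⟩ :=
    fun i hlt h0 => peelMap_apply_inl hr' hchar hn' t z ⟨(i : ℕ), hlt⟩
  have hYs : ∀ (i : Fin r) (hlt : (i : ℕ) < r') (q : ℕ) (hq : q < n' ⟨(i : ℕ), hlt⟩)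
      (h1 : q + 1 < n i), Y ⟨i, ⟨q + 1, h1⟩⟩ = z ⟨⟨(i : ℕ), hlt⟩, ⟨q, hq⟩⟩ :=
    fun i hlt q hq h1 => peelMap_apply_inr hr' hchar hn' t z ⟨⟨(i : ℕ), hlt⟩, ⟨q, hq⟩⟩
  have hnq : ∀ (i : ℕ) (h : i < r') (h' : i < r), n' ⟨i, h⟩ + 1 = n ⟨i, h'⟩ := by
    intro i h h'
    have := hn' ⟨i, h⟩
    simpa [Fin.castLE_mk] using this
  constructor
  · rintro ⟨hY1, hY2, hY3, hY4, hY5⟩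
    refine ⟨fun i' => ⟨?_, ?_⟩, ?_, ?_, ?_, ?_, ?_⟩
    · -- lower bound
      unfold lbF
      have hlt : (i' : ℕ) < r' := i'.2
      have hir : (i' : ℕ) < r := lt_of_lt_of_le hlt hr'
      have h0 : 0 < n (⟨(i' : ℕ), hir⟩ : Fin r) := (hchar _).2 hlt
      split_ifs with h
      · exact (hY4 (i' : ℕ) h h0).trans_eq (hY0 ⟨(i' : ℕ), hir⟩ hlt h0)
      · exact (hY1 ⟨⟨(i' : ℕ), hir⟩, ⟨0, h0⟩⟩).trans_eq (hY0 ⟨(i' : ℕ), hir⟩ hlt h0)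
    · have hlt : (i' : ℕ) < r' := i'.2
      have hir : (i' : ℕ) < r := lt_of_lt_of_le hlt hr'
      have h0 : 0 < n (⟨(i' : ℕ), hir⟩ : Fin r) := (hchar _).2 hlt
      exact (hY0 ⟨(i' : ℕ), hir⟩ hlt h0).symm.trans_le (hY2 ⟨(i' : ℕ), hir⟩ h0)
    · -- z nonneg
      rintro ⟨i', q⟩
      have hir : (i' : ℕ) < r := lt_of_lt_of_le i'.2 hr'
      have h1 : (q : ℕ) + 1 < n (⟨(i' : ℕ), hir⟩ : Fin r) := by
        have := hnq (i' : ℕ) i'.2 hir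
        have hq2 : (q : ℕ) < n' ⟨(i' : ℕ), i'.2⟩ := q.2
        omega
      exact (hY1 ⟨⟨(i' : ℕ), hir⟩, ⟨(q : ℕ) + 1, h1⟩⟩).trans_eq
        (hYs ⟨(i' : ℕ), hir⟩ i'.2 (q : ℕ) (by simpa using q.2) h1)
    · -- z first cell ≤ t
      intro i' h0'
      have hir : (i' : ℕ) < r := lt_of_lt_of_le i'.2 hr'
      have h1 : 0 + 1 < n (⟨(i' : ℕ), hir⟩ : Fin r) := by
        have := hnq (i' : ℕ) i'.2 hir; have : 0 < n' ⟨(i' : ℕ), i'.2⟩ := by simpa using h0'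
        omega
      exact ((hYs ⟨(i' : ℕ), hir⟩ i'.2 0 (by simpa using h0') h1).symm.trans_le
        (hY3 ⟨(i' : ℕ), hir⟩ 0 h1)).trans_eq (hY0 ⟨(i' : ℕ), hir⟩ i'.2 (Nat.lt_of_succ_lt h1))
    · -- z chain decreasing
      intro i' q h
      have hir : (i' : ℕ) < r := lt_of_lt_of_le i'.2 hr'
      have h1 : q + 1 + 1 < n (⟨(i' : ℕ), hir⟩ : Fin r) := by
        have := hnq (i' : ℕ) i'.2 hir; have : q + 1 < n' ⟨(i' : ℕ), i'.2⟩ := by simpa using h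
        omega
      exact ((hYs ⟨(i' : ℕ), hir⟩ i'.2 (q + 1) (by simpa using h) h1).symm.trans_le
        (hY3 ⟨(i' : ℕ), hir⟩ (q + 1) h1)).trans_eq
        (hYs ⟨(i' : ℕ), hir⟩ i'.2 q (by simpa using Nat.lt_of_succ_lt h) (Nat.lt_of_succ_lt h1))
    · -- coupling with start
      intro i h h0'
      have hir : (i : ℕ) + 1 < r := by have := lt_of_lt_of_le h hr'; omega
      have hi1r : (i : ℕ) < r := Nat.lt_of_succ_lt hir
      have h1 : 0 + 1 < n (⟨i, hi1r⟩ : Fin r) := by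
        have := hnq i (Nat.lt_of_succ_lt h) hi1r
        have : 0 < n' ⟨i, Nat.lt_of_succ_lt h⟩ := by simpa using h0'
        omega
      have h2 : 0 < n ⟨i + 1, hir⟩ := (hchar _).2 h
      exact (hY0 ⟨i + 1, hir⟩ h h2).symm.trans_le
        ((hY5 i hir 0 h1 h2).trans_eq
          (hYs ⟨i, hi1r⟩ (Nat.lt_of_succ_lt h) 0 (by simpa using h0') h1))
    · -- coupling interior
      intro i h q h1' h2'
      have hir : (i : ℕ) + 1 < r := by have := lt_of_lt_of_le h hr'; omega
      have hi1r : (i : ℕ) < r := Nat.lt_of_succ_lt hir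
      have h1 : q + 1 + 1 < n (⟨i, hi1r⟩ : Fin r) := by
        have := hnq i (Nat.lt_of_succ_lt h) hi1r
        have : q + 1 < n' ⟨i, Nat.lt_of_succ_lt h⟩ := by simpa using h1'
        omega
      have h2 : q + 1 < n ⟨i + 1, hir⟩ := by
        have := hnq (i + 1) h hir
        have : q < n' ⟨i + 1, h⟩ := by simpa using h2'
        omega
      exact ((hYs ⟨i + 1, hir⟩ h q (by simpa using h2') h2).symm.trans_le
        (hY5 i hir (q + 1) h1 h2)).trans_eq
        (hYs ⟨i, hi1r⟩ (Nat.lt_of_succ_lt h) (q + 1) (by simpa using h1') h1)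
  · rintro ⟨hbox, hz1, hz2, hz3, hz4, hz5⟩
    have ht0 : ∀ i' : Fin r', 0 ≤ t i' := by
      intro i'
      refine le_trans ?_ (hbox i').1
      unfold lbF
      split_ifs with h
      · exact hb0 _
      · exact le_rfl
    refine ⟨?_, ?_, ?_, ?_, ?_⟩
    · -- nonneg
      intro c
      obtain ⟨s, rfl⟩ := (peelEquiv hr' hchar hn').surjective c
      rcases s with i' | ⟨i', q⟩
      · exact (ht0 i').trans_eq (peelMap_apply_inl hr' hchar hn' t z i').symm
      · exact (hz1 ⟨i', q⟩).trans_eq (peelMap_apply_inr hr' hchar hn' t z ⟨i', q⟩).symm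
    · -- first cell ≤ b
      intro i h0
      have hlt : (i : ℕ) < r' := (hchar i).1 h0
      exact (hY0 i hlt h0).trans_le ((hbox ⟨(i : ℕ), hlt⟩).2.trans_eq rfl)
    · -- chain decreasing
      intro i q h
      have hlt : (i : ℕ) < r' := (hchar i).1 (by omega)
      have hnn : q + 1 ≤ n' ⟨(i : ℕ), hlt⟩ := by
        have := hnq (i : ℕ) hlt i.2
        have h' : q + 1 < n ⟨(i : ℕ), i.2⟩ := h
        omega
      match q, h with
      | 0, h =>
        have hq : 0 < n' ⟨(i : ℕ), hlt⟩ := hnn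
        exact ((hYs i hlt 0 hq h).trans_le (hz2 ⟨(i : ℕ), hlt⟩ hq)).trans_eq
          (hY0 i hlt (Nat.lt_of_succ_lt h)).symm
      | (p+1), h =>
        have hq : p + 1 < n' ⟨(i : ℕ), hlt⟩ := hnn
        exact ((hYs i hlt (p+1) hq h).trans_le (hz3 ⟨(i : ℕ), hlt⟩ p hq)).trans_eq
          (hYs i hlt p (Nat.lt_of_succ_lt hq) (Nat.lt_of_succ_lt h)).symm
    · -- coupling with b
      intro i h h0
      have hlt : (i : ℕ) < r' := (hchar _).1 h0
      have hlow := (hbox ⟨i, hlt⟩).1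
      unfold lbF at hlow
      rw [dif_pos h] at hlow
      exact hlow.trans_eq (hY0 _ hlt h0).symm
    · -- coupling interior
      intro i h q h1 h2
      have hlt1 : (i : ℕ) + 1 < r' := (hchar _).1 (lt_of_le_of_lt (Nat.zero_le _) h2)
      have hlt : (i : ℕ) < r' := by omega
      match q, h1, h2 with
      | 0, h1, h2 =>
        have hq : 0 < n' ⟨i, hlt⟩ := by
          have := hnq i hlt (Nat.lt_of_succ_lt h)
          have h1' : 0 + 1 < n ⟨(i : ℕ), Nat.lt_of_succ_lt h⟩ := h1
          omega
        exact ((hY0 ⟨i + 1, h⟩ hlt1 h2).trans_le (hz4 i hlt1 hq)).trans_eq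
          (hYs ⟨i, Nat.lt_of_succ_lt h⟩ hlt 0 hq h1).symm
      | (p+1), h1, h2 =>
        have hq : p + 1 < n' ⟨i, hlt⟩ := by
          have := hnq i hlt (Nat.lt_of_succ_lt h)
          have h1' : p + 1 + 1 < n ⟨(i : ℕ), Nat.lt_of_succ_lt h⟩ := h1
          omega
        have hp : p < n' ⟨i+1, hlt1⟩ := by
          have := hnq (i+1) hlt1 h
          have h2' : p + 1 < n ⟨(i : ℕ) + 1, h⟩ := h2
          omega
        exact ((hYs ⟨i + 1, h⟩ hlt1 p hp h2).trans_le (hz5 i hlt1 p hq hp)).trans_eq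
          (hYs ⟨i, Nat.lt_of_succ_lt h⟩ hlt (p+1) hq h1).symm
end Mem

section PeelVol
variable {r r' : ℕ} {n : Fin r → ℕ} {n' : Fin r' → ℕ} (hr' : r' ≤ r)
  (hchar : ∀ i : Fin r, 0 < n i ↔ (i : ℕ) < r')
  (hn' : ∀ i : Fin r', n' i + 1 = n (Fin.castLE hr' i))
  (b : Fin r → ℝ) (hb0 : ∀ i, 0 ≤ b i)

include hchar hn' hb0 in
lemma glSet_volume_peel :
    volume (glSet r n b) = ∫⁻ t : Fin r' → ℝ,
      (Set.univ.pi fun i : Fin r' =>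
        Set.Icc (lbF r' b i) (b (Fin.castLE hr' i))).indicator
        (fun t => volume (glSet r' n' t)) t := by
  have hmp := peelMap_measurePreserving hr' hchar hn'
  rw [← hmp.measure_preimage (measurableSet_glSet r n b).nullMeasurableSet]
  rw [Measure.volume_eq_prod _ _,
    Measure.prod_apply (hmp.measurable (measurableSet_glSet r n b))]
  refine lintegral_congr fun t => ?_
  by_cases ht : t ∈ Set.univ.pi fun i : Fin r' =>
      Set.Icc (lbF r' b i) (b (Fin.castLE hr' i))
  · rw [Set.indicator_of_mem ht]
    congr 1
    ext z
    simp only [Set.mem_preimage]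
    simp only [Set.mem_pi, Set.mem_univ, Set.mem_Icc, forall_true_left] at ht
    exact ⟨fun h => ((peelMap_mem_iff hr' hchar hn' b hb0 t z).1 h).2,
      fun h => (peelMap_mem_iff hr' hchar hn' b hb0 t z).2 ⟨fun i => ht i, h⟩⟩
  · rw [Set.indicator_of_notMem ht]
    convert measure_empty
    · ext z
      simp only [Set.mem_preimage, Set.mem_empty_iff_false, iff_false]
      intro hmem
      exact ht (by
        rw [Set.mem_pi]
        intro i _
        rw [Set.mem_Icc]
        exact ((peelMap_mem_iff hr' hchar hn' b hb0 t z).1 hmem).1 i)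
    · infer_instance

end PeelVol

section BoxInt
variable {m : ℕ} (lb ub : Fin m → ℝ)

lemma box_integral_prod_pow (hle : ∀ i, lb i ≤ ub i) (e : Fin m → ℕ) :
    ∫ t in Set.univ.pi fun i => Set.Icc (lb i) (ub i), ∏ i, t i ^ e i =
      ∏ i, (ub i ^ (e i + 1) - lb i ^ (e i + 1)) / ((e i : ℝ) + 1) := by
  have hBoxm : MeasurableSet (Set.univ.pi fun i => Set.Icc (lb i) (ub i)) :=
    MeasurableSet.univ_pi fun i => measurableSet_Icc
  rw [← integral_indicator hBoxm]
  have hrepl : (Set.univ.pi fun i => Set.Icc (lb i) (ub i)).indicator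
      (fun t : Fin m → ℝ => ∏ i, t i ^ e i) =
      fun t => ∏ i, (Set.Icc (lb i) (ub i)).indicator (fun s => s ^ e i) (t i) := by
    funext t
    by_cases ht : t ∈ Set.univ.pi fun i => Set.Icc (lb i) (ub i)
    · rw [Set.indicator_of_mem ht]
      have ht' := ht
      simp only [Set.mem_pi, Set.mem_univ, forall_true_left] at ht'
      exact Finset.prod_congr rfl fun i _ => (Set.indicator_of_mem (ht' i) _).symm
    · rw [Set.indicator_of_notMem ht]
      simp only [Set.mem_pi, Set.mem_univ, forall_true_left, not_forall] at ht
      obtain ⟨i, hi⟩ := ht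
      exact (Finset.prod_eq_zero (Finset.mem_univ i)
        (by rw [Set.indicator_of_notMem hi])).symm
  rw [hrepl, MeasureTheory.integral_fintype_prod_volume_eq_prod
    (f := fun i s => (Set.Icc (lb i) (ub i)).indicator (fun s => s ^ e i) s)]
  refine Finset.prod_congr rfl fun i _ => ?_
  rw [integral_indicator measurableSet_Icc, MeasureTheory.integral_Icc_eq_integral_Ioc,
    ← intervalIntegral.integral_of_le (hle i), integral_pow]

lemma box_integral_det (hle : ∀ i, lb i ≤ ub i) (g : Fin m → ℕ) :
    ∫ t in Set.univ.pi fun i => Set.Icc (lb i) (ub i),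
        (Matrix.of fun i j : Fin m => t i ^ g j).det =
      (Matrix.of fun i j : Fin m =>
        (ub i ^ (g j + 1) - lb i ^ (g j + 1)) / ((g j : ℝ) + 1)).det := by
  have hdet : ∀ t : Fin m → ℝ, (Matrix.of fun i j : Fin m => t i ^ g j).det =
      ∑ σ : Equiv.Perm (Fin m), ((Equiv.Perm.sign σ : ℤ) : ℝ) * ∏ i, t i ^ g (σ i) := by
    intro t
    rw [← Matrix.det_transpose, Matrix.det_apply']
    rfl
  simp_rw [hdet]
  rw [integral_finset_sum]
  · have : ∀ σ : Equiv.Perm (Fin m),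
        ∫ t in Set.univ.pi fun i => Set.Icc (lb i) (ub i),
          ((Equiv.Perm.sign σ : ℤ) : ℝ) * ∏ i, t i ^ g (σ i) =
        ((Equiv.Perm.sign σ : ℤ) : ℝ) *
          ∏ i, (ub i ^ (g (σ i) + 1) - lb i ^ (g (σ i) + 1)) / ((g (σ i) : ℝ) + 1) := by
      intro σ
      rw [integral_const_mul, box_integral_prod_pow lb ub hle (fun i => g (σ i))]
    simp_rw [this]
    rw [← Matrix.det_transpose, Matrix.det_apply']
    rfl
  · intro σ _
    refine Integrable.const_mul ?_ _
    refine (ContinuousOn.integrableOn_compact (isCompact_univ_pi fun i => isCompact_Icc) ?_)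
    exact Continuous.continuousOn (by fun_prop)

end BoxInt

section DetOps

/-- Telescoping row operations: replacing each row by (row i − row (i+1)) (with the
convention of subtracting 0 from the last row) preserves the determinant. -/
lemma det_telescope (r : ℕ) (V : Matrix (Fin r) (Fin r) ℝ) :
    (Matrix.of fun i j : Fin r =>
        V i j - (if h : (i : ℕ) + 1 < r then V ⟨(i : ℕ) + 1, h⟩ j else 0)).det = V.det := by
  set D : Matrix (Fin r) (Fin r) ℝ := Matrix.of fun i j : Fin r =>
    V i j - (if h : (i : ℕ) + 1 < r then V ⟨(i : ℕ) + 1, h⟩ j else 0) with hD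
  set L : Matrix (Fin r) (Fin r) ℝ := Matrix.of fun i k : Fin r =>
    if i ≤ k then (1 : ℝ) else 0 with hL
  have hLD : L * D = V := by
    ext i j
    rw [Matrix.mul_apply]
    set f : ℕ → ℝ := fun s => if h : s < r then V ⟨s, h⟩ j else 0 with hf
    have hDf : ∀ k : Fin r, D k j = f (k : ℕ) - f ((k : ℕ) + 1) := by
      intro k
      show V k j - _ = _
      simp only [hf]
      rw [dif_pos k.2]
    have hstep : ∀ k : Fin r, L i k * D k j =
        if (i : ℕ) ≤ (k : ℕ) then f (k : ℕ) - f ((k : ℕ) + 1) else 0 := by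
      intro k
      by_cases h : i ≤ k
      · rw [hDf k, if_pos (Fin.le_iff_val_le_val.mp h)]
        show (if i ≤ k then (1:ℝ) else 0) * _ = _
        rw [if_pos h, one_mul]
      · rw [if_neg (fun hc => h (Fin.le_iff_val_le_val.mpr hc))]
        show (if i ≤ k then (1:ℝ) else 0) * _ = 0
        rw [if_neg h, zero_mul]
    simp_rw [hstep]
    rw [Fin.sum_univ_eq_sum_range (fun s => if (i : ℕ) ≤ s then f s - f (s + 1) else 0) r]
    rw [← Finset.sum_filter]
    have hIco : (Finset.range r).filter (fun s => (i : ℕ) ≤ s) = Finset.Ico (i : ℕ) r := by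
      ext s
      simp only [Finset.mem_filter, Finset.mem_range, Finset.mem_Ico]
      omega
    rw [hIco, Finset.sum_Ico_eq_sum_range]
    have hcongr : ∀ s ∈ Finset.range (r - (i : ℕ)),
        f ((i : ℕ) + s) - f ((i : ℕ) + s + 1) =
          (fun u => f ((i : ℕ) + u)) s - (fun u => f ((i : ℕ) + u)) (s + 1) := by
      intro s _
      simp [Nat.add_assoc]
    rw [Finset.sum_congr rfl hcongr, Finset.sum_range_sub' (fun u => f ((i : ℕ) + u))]
    have h2 : (i : ℕ) + (r - (i : ℕ)) = r := by have := i.2; omega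
    rw [Nat.add_zero, h2]
    simp only [hf]
    rw [dif_pos i.2, dif_neg (lt_irrefl r), sub_zero]
  have hdL : L.det = 1 := by
    have htri : L.BlockTriangular id := by
      intro i j hij
      simp only [id_eq] at hij
      show (if i ≤ j then (1:ℝ) else 0) = 0
      rw [if_neg (not_le_of_gt hij)]
    rw [Matrix.det_of_upperTriangular htri]
    simp [hL]
  calc D.det = L.det * D.det := by rw [hdL, one_mul]
  _ = (L * D).det := (Matrix.det_mul L D).symm
  _ = V.det := by rw [hLD]

/-- Expanding along the last column when it is `(0,…,0,1)ᵀ`. -/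
lemma det_drop_last (r' : ℕ) (M : Matrix (Fin (r' + 1)) (Fin (r' + 1)) ℝ)
    (hcol : ∀ i : Fin r', M (Fin.castSucc i) (Fin.last r') = 0)
    (hcorner : M (Fin.last r') (Fin.last r') = 1) :
    M.det = (Matrix.of fun i j : Fin r' =>
      M (Fin.castSucc i) (Fin.castSucc j)).det := by
  have hlast : ∀ j : Fin 1, (finSumFinEquiv (Sum.inr j) : Fin (r' + 1)) = Fin.last r' := by
    intro j
    have : (j : ℕ) = 0 := by omega
    ext
    simp [finSumFinEquiv, Fin.natAdd, Fin.last, this]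
  have hcast : ∀ i : Fin r', (finSumFinEquiv (Sum.inl i) : Fin (r' + 1)) = Fin.castSucc i := by
    intro i
    ext
    simp [finSumFinEquiv, Fin.castAdd, Fin.castSucc, Fin.castLE]
  have hsub : M.submatrix (finSumFinEquiv) (finSumFinEquiv) =
      Matrix.fromBlocks (Matrix.of fun i j : Fin r' => M (Fin.castSucc i) (Fin.castSucc j)) 0
        (Matrix.of fun (_ : Fin 1) (j : Fin r') => M (Fin.last r') (Fin.castSucc j))
        (Matrix.of fun (_ _ : Fin 1) => (1 : ℝ)) := by
    ext i j
    rcases i with i | i <;> rcases j with j | j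
    · show M _ _ = M _ _
      rw [hcast i, hcast j]
    · show M _ _ = 0
      rw [hcast i, hlast j]
      exact hcol i
    · show M _ _ = M _ _
      rw [hlast i, hcast j]
    · show M _ _ = 1
      rw [hlast i, hlast j]
      exact hcorner
  rw [← Matrix.det_submatrix_equiv_self finSumFinEquiv M, hsub,
    Matrix.det_fromBlocks_zero₁₂, Matrix.det_fin_one]
  show _ * (1 : ℝ) = _
  rw [mul_one]

end DetOps

lemma lintegral_box_ofReal {m : ℕ} (lb ub : Fin m → ℝ)
    (f : (Fin m → ℝ) → ℝ) (hcont : Continuous f)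
    (hnn : ∀ t ∈ Set.univ.pi fun i => Set.Icc (lb i) (ub i), 0 ≤ f t) :
    ∫⁻ t in Set.univ.pi fun i => Set.Icc (lb i) (ub i), ENNReal.ofReal (f t) =
      ENNReal.ofReal (∫ t in Set.univ.pi fun i => Set.Icc (lb i) (ub i), f t) := by
  have hBoxm : MeasurableSet (Set.univ.pi fun i : Fin m => Set.Icc (lb i) (ub i)) :=
    MeasurableSet.univ_pi fun i => measurableSet_Icc
  rw [← MeasureTheory.ofReal_integral_eq_lintegral_ofReal]
  · exact (hcont.continuousOn.integrableOn_compact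
      (isCompact_univ_pi fun i => isCompact_Icc))
  · exact (ae_restrict_iff' hBoxm).mpr (ae_of_all _ hnn)

lemma gl_step {r r' : ℕ} (hr' : r' ≤ r) {n : Fin r → ℕ} {n' : Fin r' → ℕ}
    (hchar : ∀ i : Fin r, 0 < n i ↔ (i : ℕ) < r')
    (hn' : ∀ i : Fin r', n' i + 1 = n (Fin.castLE hr' i))
    (b : Fin r → ℝ) (hb0 : ∀ i, 0 ≤ b i) (hb1 : ∀ i, b i ≤ 1)
    (hbmono : ∀ i j : Fin r, i ≤ j → b j ≤ b i)
    (IH' : ∀ t : Fin r' → ℝ, (∀ i, 0 ≤ t i) → (∀ i, t i ≤ 1) →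
      (∀ i j : Fin r', i ≤ j → t j ≤ t i) →
      volume (glSet r' n' t) =
        ENNReal.ofReal ((Matrix.of fun i j : Fin r' => t i ^ n' j).det /
          ∏ j, (Nat.factorial (n' j) : ℝ)) ∧
      0 ≤ (Matrix.of fun i j : Fin r' => t i ^ n' j).det)
    (hdetbr : (Matrix.of fun i j : Fin r' =>
        b (Fin.castLE hr' i) ^ (n' j + 1) - lbF r' b i ^ (n' j + 1)).det =
      (Matrix.of fun i j : Fin r => b i ^ n j).det)
    (hfact : ∏ j : Fin r', ((n' j + 1).factorial : ℝ) = ∏ j : Fin r, ((n j).factorial : ℝ)) :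
    volume (glSet r n b) =
      ENNReal.ofReal ((Matrix.of fun i j : Fin r => b i ^ n j).det /
        ∏ j, (Nat.factorial (n j) : ℝ)) ∧
    0 ≤ (Matrix.of fun i j : Fin r => b i ^ n j).det := by
  classical
  set lb : Fin r' → ℝ := lbF r' b with hlbdef
  set ub : Fin r' → ℝ := fun i => b (Fin.castLE hr' i) with hubdef
  have hlb0 : ∀ i, 0 ≤ lb i := by
    intro i
    rw [hlbdef]
    unfold lbF
    split_ifs with h
    · exact hb0 _
    · exact le_rfl
  have hlbub : ∀ i, lb i ≤ ub i := by
    intro i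
    rw [hlbdef, hubdef]
    unfold lbF
    split_ifs with h
    · exact hbmono _ _ (by rw [Fin.le_iff_val_le_val]; simp)
    · exact hb0 _
  have hBoxm : MeasurableSet (Set.univ.pi fun i : Fin r' => Set.Icc (lb i) (ub i)) :=
    MeasurableSet.univ_pi fun i => measurableSet_Icc
  have htfacts : ∀ t ∈ Set.univ.pi fun i : Fin r' => Set.Icc (lb i) (ub i),
      (∀ i, 0 ≤ t i) ∧ (∀ i, t i ≤ 1) ∧ (∀ i j : Fin r', i ≤ j → t j ≤ t i) := by
    intro t ht
    simp only [Set.mem_pi, Set.mem_univ, Set.mem_Icc, forall_true_left] at ht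
    refine ⟨fun i => le_trans (hlb0 i) (ht i).1,
      fun i => le_trans (ht i).2 (hb1 _), fun i j hij => ?_⟩
    rcases eq_or_lt_of_le hij with rfl | hlt
    · exact le_rfl
    · have hj : (i : ℕ) + 1 ≤ (j : ℕ) := Fin.lt_iff_val_lt_val.mp hlt
      have hir : (i : ℕ) + 1 < r := by have := j.2; omega
      have h1 : t j ≤ b ⟨(i : ℕ) + 1, hir⟩ := by
        refine le_trans (ht j).2 (hbmono _ _ ?_)
        rw [Fin.le_iff_val_le_val]
        simpa using hj
      have h2 : b ⟨(i : ℕ) + 1, hir⟩ ≤ t i := by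
        refine le_trans ?_ (ht i).1
        rw [hlbdef]
        unfold lbF
        rw [dif_pos hir]
      exact le_trans h1 h2
  -- the continuous integrand
  have hcont : Continuous fun t : Fin r' → ℝ =>
      (Matrix.of fun i j : Fin r' => t i ^ n' j).det := by
    have : Continuous fun t : Fin r' → ℝ => (Matrix.of fun i j : Fin r' => t i ^ n' j) :=
      continuous_matrix fun i j => (continuous_apply i).pow _
    exact this.matrix_det
  have hC : (0:ℝ) < ∏ j : Fin r', (Nat.factorial (n' j) : ℝ) :=
    Finset.prod_pos fun j _ => by positivity
  -- volume = set integral of the IH values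
  have step1 : volume (glSet r n b) =
      ∫⁻ t in Set.univ.pi fun i : Fin r' => Set.Icc (lb i) (ub i),
        ENNReal.ofReal ((Matrix.of fun i j : Fin r' => t i ^ n' j).det /
          ∏ j, (Nat.factorial (n' j) : ℝ)) := by
    rw [glSet_volume_peel hr' hchar hn' b hb0, lintegral_indicator hBoxm]
    refine setLIntegral_congr_fun hBoxm (fun t ht => ?_)
    obtain ⟨h1, h2, h3⟩ := htfacts t ht
    exact (IH' t h1 h2 h3).1
  have step2 : ∫⁻ t in Set.univ.pi fun i : Fin r' => Set.Icc (lb i) (ub i),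
        ENNReal.ofReal ((Matrix.of fun i j : Fin r' => t i ^ n' j).det /
          ∏ j, (Nat.factorial (n' j) : ℝ)) =
      ENNReal.ofReal ((∫ t in Set.univ.pi fun i : Fin r' => Set.Icc (lb i) (ub i),
        (Matrix.of fun i j : Fin r' => t i ^ n' j).det) /
          ∏ j, (Nat.factorial (n' j) : ℝ)) := by
    rw [lintegral_box_ofReal lb ub _ (hcont.div_const _)
      (fun t ht => div_nonneg ((IH' t (htfacts t ht).1 (htfacts t ht).2.1
        (htfacts t ht).2.2).2) (le_of_lt hC))]
    rw [integral_div]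
  have hintnn : 0 ≤ ∫ t in Set.univ.pi fun i : Fin r' => Set.Icc (lb i) (ub i),
      (Matrix.of fun i j : Fin r' => t i ^ n' j).det :=
    setIntegral_nonneg hBoxm fun t ht =>
      (IH' t (htfacts t ht).1 (htfacts t ht).2.1 (htfacts t ht).2.2).2
  have step3 : ∫ t in Set.univ.pi fun i : Fin r' => Set.Icc (lb i) (ub i),
      (Matrix.of fun i j : Fin r' => t i ^ n' j).det =
      (Matrix.of fun i j : Fin r => b i ^ n j).det *
        ∏ j : Fin r', (((n' j : ℝ) + 1))⁻¹ := by
    rw [box_integral_det lb ub hlbub n']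
    have hA : (Matrix.of fun i j : Fin r' =>
        (ub i ^ (n' j + 1) - lb i ^ (n' j + 1)) / ((n' j : ℝ) + 1)) =
        (Matrix.of fun i j : Fin r' => ub i ^ (n' j + 1) - lb i ^ (n' j + 1)) *
          Matrix.diagonal (fun j => ((n' j : ℝ) + 1)⁻¹) := by
      ext i j
      rw [Matrix.mul_diagonal]
      simp only [Matrix.of_apply]
      rw [div_eq_mul_inv]
    rw [hA, Matrix.det_mul, Matrix.det_diagonal, hdetbr]
  have hfinal : (Matrix.of fun i j : Fin r => b i ^ n j).det *
        (∏ j : Fin r', (((n' j : ℝ) + 1))⁻¹) / ∏ j, (Nat.factorial (n' j) : ℝ) =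
      (Matrix.of fun i j : Fin r => b i ^ n j).det / ∏ j, (Nat.factorial (n j) : ℝ) := by
    have hD : (∏ j : Fin r', ((n' j + 1).factorial : ℝ)) =
        (∏ j : Fin r', ((n' j : ℝ) + 1)) * ∏ j, ((n' j).factorial : ℝ) := by
      rw [← Finset.prod_mul_distrib]
      refine Finset.prod_congr rfl fun j _ => ?_
      rw [Nat.factorial_succ]
      push_cast
      ring
    rw [Finset.prod_inv_distrib, ← div_eq_mul_inv, div_div, ← hD, hfact]
  have hdetnn : 0 ≤ (Matrix.of fun i j : Fin r => b i ^ n j).det := by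
    rw [step3] at hintnn
    have hp : (0:ℝ) < ∏ j : Fin r', (((n' j : ℝ) + 1))⁻¹ :=
      Finset.prod_pos fun j _ => by positivity
    exact (mul_nonneg_iff_of_pos_right hp).mp hintnn
  refine ⟨?_, hdetnn⟩
  rw [step1, step2, step3, hfinal]

theorem gl_main : ∀ (N r : ℕ) (n : Fin r → ℕ), (∑ i, n i) = N →
    (∀ i j : Fin r, i < j → n j < n i) →
    ∀ b : Fin r → ℝ, (∀ i, 0 ≤ b i) → (∀ i, b i ≤ 1) →
    (∀ i j : Fin r, i ≤ j → b j ≤ b i) →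
    volume (glSet r n b) =
      ENNReal.ofReal ((Matrix.of fun i j : Fin r => b i ^ n j).det /
        ∏ j, (Nat.factorial (n j) : ℝ)) ∧
    0 ≤ (Matrix.of fun i j : Fin r => b i ^ n j).det := by
  intro N
  induction N using Nat.strong_induction_on with
  | _ N IH =>
    intro r n hsum hstrict b hb0 hb1 hbmono
    by_cases hN : N = 0
    · -- base case : all chains empty
      subst hN
      have hz : ∀ i, n i = 0 := by
        intro i
        have := Finset.sum_eq_zero_iff.mp hsum i (Finset.mem_univ i)
        exact this
      haveI hEmpty : IsEmpty (Σ i : Fin r, Fin (n i)) :=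
        ⟨fun c => by have h1 := c.2.2; have h2 := hz c.1; omega⟩
      have hvol : volume (glSet r n b) = 1 := by
        have huniv : glSet r n b = Set.univ := by
          apply Set.eq_univ_of_forall
          intro y
          refine ⟨fun c => (hEmpty.false c).elim, fun i h => ?_, fun i q h => ?_,
            fun i h h0 => ?_, fun i h q h1 h2 => ?_⟩
          · have := hz i; omega
          · have := hz i; omega
          · have := hz ⟨i, Nat.lt_of_succ_lt h⟩; omega
          · have := hz ⟨i, Nat.lt_of_succ_lt h⟩; omega
        rw [huniv, MeasureTheory.volume_pi, Measure.pi_univ]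
        simp
      rw [hvol]
      match r, n, hz, hstrict with
      | 0, n, hz, hstrict =>
        constructor
        · rw [Matrix.det_isEmpty]
          norm_num
        · rw [Matrix.det_isEmpty]; norm_num
      | 1, n, hz, hstrict =>
        constructor
        · rw [Matrix.det_fin_one]
          simp [hz 0]
        · rw [Matrix.det_fin_one]
          simp [hz 0]
      | (r+2), n, hz, hstrict =>
        exfalso
        have := hstrict 0 1 (by simp [Fin.lt_iff_val_lt_val])
        rw [hz 0, hz 1] at this
        omega
    · -- inductive step
      have hr0 : 0 < r := by
        by_contra h
        push_neg at h
        have hr : r = 0 := by omega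
        subst hr
        simp at hsum
        omega
      obtain ⟨rr, rfl⟩ : ∃ rr, r = rr + 1 := ⟨r - 1, by omega⟩
      by_cases hlast : n (Fin.last rr) = 0
      · -- last chain is empty: peel with r' = rr
        have hrr0 : 0 < rr := by
          by_contra h
          push_neg at h
          have hrr : rr = 0 := by omega
          subst hrr
          have hzz : ∀ i : Fin 1, n i = 0 := by
            intro i
            have : i = Fin.last 0 := by ext; omega
            rw [this]; exact hlast
          rw [Finset.sum_eq_zero fun i _ => hzz i] at hsum
          omega
        have hr'le : rr ≤ rr + 1 := by omega
        have hchar : ∀ i : Fin (rr + 1), 0 < n i ↔ (i : ℕ) < rr := by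
          intro i
          constructor
          · intro h0
            by_contra hge
            have : i = Fin.last rr := by ext; simp [Fin.last]; omega
            rw [this] at h0
            omega
          · intro hlt
            have := hstrict i (Fin.last rr) (by rw [Fin.lt_iff_val_lt_val]; simpa [Fin.last])
            omega
        set n' : Fin rr → ℕ := fun i => n (Fin.castLE hr'le i) - 1 with hn'def
        have hn' : ∀ i : Fin rr, n' i + 1 = n (Fin.castLE hr'le i) := by
          intro i
          have hpos : 0 < n (Fin.castLE hr'le i) := (hchar _).2 (by simpa using i.2)
          simp only [hn'def]
          omega
        have hsumlt : ∑ i, n' i < N := by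
          have h1 : ∑ i : Fin rr, n' i < ∑ i : Fin rr, (n' i + 1) := by
            refine Finset.sum_lt_sum_of_nonempty ?_ fun i _ => by omega
            exact Finset.univ_nonempty_iff.mpr ⟨⟨0, hrr0⟩⟩
          have h2 : ∑ i : Fin rr, (n' i + 1) = ∑ i : Fin rr, n (Fin.castLE hr'le i) :=
            Finset.sum_congr rfl fun i _ => hn' i
          have h3 : ∑ i : Fin (rr + 1), n i =
              (∑ i : Fin rr, n (Fin.castSucc i)) + n (Fin.last rr) :=
            Fin.sum_univ_castSucc n
          have h4 : ∑ i : Fin rr, n (Fin.castSucc i) = ∑ i : Fin rr, n (Fin.castLE hr'le i) :=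
            Finset.sum_congr rfl fun i _ => rfl
          omega
        have hstrict' : ∀ i j : Fin rr, i < j → n' j < n' i := by
          intro i j hij
          have h1 := hstrict (Fin.castLE hr'le i) (Fin.castLE hr'le j)
            (by rwa [Fin.lt_iff_val_lt_val] at hij ⊢)
          have h2 := hn' i
          have h3 := hn' j
          omega
        refine gl_step hr'le hchar hn' b hb0 hb1 hbmono
          (fun t ht0 ht1 htmono => IH (∑ i, n' i) hsumlt rr n' rfl hstrict' t ht0 ht1 htmono)
          ?_ ?_
        · -- determinant identity, branch A
          have htel := det_telescope (rr + 1) (Matrix.of fun i j : Fin (rr+1) => b i ^ n j)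
          rw [← htel]
          rw [det_drop_last rr _ ?_ ?_]
          · congr 1
            ext i j
            simp only [Matrix.of_apply]
            have hd : ((Fin.castSucc i : Fin (rr+1)) : ℕ) + 1 < rr + 1 := by
              rw [Fin.coe_castSucc]
              omega
            rw [dif_pos hd]
            have he : n' j + 1 = n (Fin.castSucc j) := hn' j
            rw [he]
            have hlb : lbF rr b i = b ⟨(i : ℕ) + 1, hd⟩ := by
              unfold lbF
              rw [dif_pos]
            rw [hlb]
            rfl
          · intro i
            simp only [Matrix.of_apply]
            have hd : ((Fin.castSucc i : Fin (rr+1)) : ℕ) + 1 < rr + 1 := by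
              rw [Fin.coe_castSucc]
              omega
            rw [dif_pos hd]
            rw [hlast]
            norm_num
          · simp only [Matrix.of_apply]
            have hd : ¬ ((Fin.last rr : Fin (rr+1)) : ℕ) + 1 < rr + 1 := by
              rw [Fin.val_last]
              omega
            rw [dif_neg hd, hlast]
            norm_num
        · -- factorial identity, branch A
          rw [Fin.prod_univ_castSucc (fun j : Fin (rr+1) => ((n j).factorial : ℝ))]
          rw [hlast]
          norm_num
          exact Finset.prod_congr rfl fun j _ => by rw [hn' j]; rfl
      · -- all chains nonempty: peel with r' = rr + 1
        have hr'le : rr + 1 ≤ rr + 1 := le_rfl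
        have hchar : ∀ i : Fin (rr + 1), 0 < n i ↔ (i : ℕ) < rr + 1 := by
          intro i
          simp only [i.2, iff_true]
          rcases eq_or_lt_of_le (Fin.le_last i) with rfl | hlt
          · omega
          · have := hstrict i (Fin.last rr) hlt
            omega
        set n' : Fin (rr + 1) → ℕ := fun i => n (Fin.castLE hr'le i) - 1 with hn'def
        have hn' : ∀ i : Fin (rr + 1), n' i + 1 = n (Fin.castLE hr'le i) := by
          intro i
          have hpos : 0 < n (Fin.castLE hr'le i) := (hchar _).2 (by simpa using i.2)
          simp only [hn'def]
          omega
        have hsumlt : ∑ i, n' i < N := by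
          have h1 : ∑ i : Fin (rr+1), n' i < ∑ i : Fin (rr+1), (n' i + 1) := by
            refine Finset.sum_lt_sum_of_nonempty ?_ fun i _ => by omega
            exact Finset.univ_nonempty_iff.mpr ⟨0⟩
          have h2 : ∑ i : Fin (rr+1), (n' i + 1) = ∑ i : Fin (rr+1), n (Fin.castLE hr'le i) :=
            Finset.sum_congr rfl fun i _ => hn' i
          have h4 : ∑ i : Fin (rr+1), n (Fin.castLE hr'le i) = ∑ i : Fin (rr+1), n i :=
            Finset.sum_congr rfl fun i _ => rfl
          omega
        have hstrict' : ∀ i j : Fin (rr+1), i < j → n' j < n' i := by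
          intro i j hij
          have h1 := hstrict (Fin.castLE hr'le i) (Fin.castLE hr'le j)
            (by rwa [Fin.lt_iff_val_lt_val] at hij ⊢)
          have h2 := hn' i
          have h3 := hn' j
          omega
        refine gl_step hr'le hchar hn' b hb0 hb1 hbmono
          (fun t ht0 ht1 htmono => IH (∑ i, n' i) hsumlt (rr+1) n' rfl hstrict' t ht0 ht1 htmono)
          ?_ ?_
        · -- determinant identity, branch B
          have htel := det_telescope (rr + 1) (Matrix.of fun i j : Fin (rr+1) => b i ^ n j)
          rw [← htel]
          congr 1
          ext i j
          simp only [Matrix.of_apply]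
          have he : n' j + 1 = n (Fin.castLE hr'le j) := hn' j
          rw [he]
          have hcj : n (Fin.castLE hr'le j) = n j := rfl
          rw [hcj]
          have hci : b (Fin.castLE hr'le i) = b i := rfl
          rw [hci]
          congr 1
          unfold lbF
          rw [apply_dite (fun s : ℝ => s ^ n j)]
          have hnj : n j ≠ 0 := by
            have := (hchar j).2 (by simpa using j.2)
            omega
          rw [zero_pow hnj]
        · -- factorial identity, branch B
          exact Finset.prod_congr rfl fun j _ => by rw [hn' j]; rfl
lemma mem_cellsOf {k : ℕ} {lam : Fin k → ℕ} {c : Fin k × ℤ} :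
    c ∈ cellsOf k lam ↔ -((k : ℤ) - 1 - (c.1 : ℤ)) ≤ c.2 ∧ c.2 ≤ (lam c.1 : ℤ) := by
  unfold cellsOf
  rw [Finset.mem_filter]
  constructor
  · exact fun h => h.2
  · intro h
    refine ⟨?_, h⟩
    rw [Finset.mem_product]
    refine ⟨Finset.mem_univ _, ?_⟩
    rw [Finset.mem_Icc]
    constructor
    · have hik : (c.1 : ℕ) < k := c.1.2
      have := h.1
      omega
    · refine le_trans h.2 ?_
      exact_mod_cast Nat.cast_le.mpr (Finset.le_sup (Finset.mem_univ c.1))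

lemma mem_freeCells {k : ℕ} {lam : Fin k → ℕ} {c : Fin k × ℤ} :
    c ∈ freeCells k lam ↔ -((k : ℤ) - 1 - (c.1 : ℤ)) < c.2 ∧ c.2 ≤ (lam c.1 : ℤ) := by
  unfold freeCells
  rw [Finset.mem_filter, mem_cellsOf]
  constructor
  · exact fun h => ⟨h.2, h.1.2⟩
  · exact fun h => ⟨⟨le_of_lt h.1, h.2⟩, h.1⟩

section E2
variable (k : ℕ) (lam : Fin k → ℕ)

/-- The number of free cells in row `i`. -/
def nrow (i : Fin k) : ℕ := lam i + (k - 1 - (i : ℕ))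

lemma cast_krow (i : Fin k) : ((k - 1 - (i : ℕ) : ℕ) : ℤ) = (k : ℤ) - 1 - (i : ℕ) := by
  have := i.2
  omega

def cellEquiv : (Σ i : Fin k, Fin (nrow k lam i)) ≃ {c : Fin k × ℤ // c ∈ freeCells k lam} where
  toFun a :=
    ⟨(a.1, (a.2 : ℤ) + 1 - ((k : ℤ) - 1 - (a.1 : ℕ))), by
      rw [mem_freeCells]
      dsimp only
      have h1 : (a.2 : ℕ) < lam a.1 + (k - 1 - (a.1 : ℕ)) := a.2.2
      have h1' : ((a.2 : ℕ) : ℤ) < (lam a.1 : ℤ) + ((k - 1 - (a.1 : ℕ) : ℕ) : ℤ) := by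
        exact_mod_cast h1
      have h2 := cast_krow k a.1
      have h3 := a.1.2
      omega⟩
  invFun c :=
    ⟨c.1.1, ⟨(c.1.2 + ((k : ℤ) - 1 - (c.1.1 : ℕ)) - 1).toNat, by
      have h1 := mem_freeCells.mp c.2
      have h2 := cast_krow k c.1.1
      have h3 := c.1.1.2
      have h4 : ((lam c.1.1 : ℕ) : ℤ) = (lam c.1.1 : ℤ) := rfl
      unfold nrow
      omega⟩⟩
  left_inv a := by
    rcases a with ⟨i, q⟩
    exact congrArg (Sigma.mk i) (Fin.ext (by
      have h2 := cast_krow k i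
      have h3 := i.2
      dsimp only
      omega))
  right_inv c := by
    rcases c with ⟨⟨i, j⟩, h⟩
    have h1 := mem_freeCells.mp h
    have h2 := cast_krow k i
    apply Subtype.ext
    dsimp only
    exact congrArg (Prod.mk i) (by dsimp only at h1; omega)

end E2

section Final
variable {k : ℕ} (lam : Fin k → ℕ) (x : Fin k → ℝ)

lemma continuous_extendDiag (c : Fin k × ℤ) :
    Continuous fun y : {c : Fin k × ℤ // c ∈ freeCells k lam} → ℝ =>
      extendDiag k lam x y c := by
  unfold extendDiag
  by_cases h : c ∈ freeCells k lam
  · simp only [dif_pos h]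
    exact continuous_apply _
  · simp only [dif_neg h]
    exact continuous_const

end Final

theorem head_polytope_section_volume (k : ℕ) (hk : 1 ≤ k)
    (lam : Fin k → ℕ) (hlam : ∀ i j : Fin k, i ≤ j → lam j ≤ lam i)
    (x : Fin k → ℝ) (hx01 : ∀ i, 0 ≤ x i ∧ x i ≤ 1) (hmono : Monotone x) :
    volume {y : {c : Fin k × ℤ // c ∈ freeCells k lam} → ℝ |
        (∀ c ∈ cellsOf k lam,
          0 ≤ extendDiag k lam x y c ∧ extendDiag k lam x y c ≤ 1) ∧
        (∀ (i : Fin k) (h : (i : ℕ) + 1 < k) (j : ℤ),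
          (i, j) ∈ cellsOf k lam → ((⟨(i : ℕ) + 1, h⟩ : Fin k), j) ∈ cellsOf k lam →
          extendDiag k lam x y ((⟨(i : ℕ) + 1, h⟩ : Fin k), j) ≤ extendDiag k lam x y (i, j)) ∧
        (∀ (i : Fin k) (j : ℤ),
          (i, j) ∈ cellsOf k lam → (i, j + 1) ∈ cellsOf k lam →
          extendDiag k lam x y (i, j + 1) ≤ extendDiag k lam x y (i, j))} =
      ENNReal.ofReal
        ((1 / ∏ j : Fin k, (Nat.factorial (lam j + (k - 1 - (j : ℕ))) : ℝ)) *
          Matrix.det (Matrix.of fun i j : Fin k =>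
            x (Fin.rev i) ^ (lam j + (k - 1 - (j : ℕ))))) := by
  classical
  set n : Fin k → ℕ := nrow k lam with hndef
  set b : Fin k → ℝ := fun i => x (Fin.rev i) with hbdef
  set S : Set ({c : Fin k × ℤ // c ∈ freeCells k lam} → ℝ) :=
    {y | (∀ c ∈ cellsOf k lam,
          0 ≤ extendDiag k lam x y c ∧ extendDiag k lam x y c ≤ 1) ∧
        (∀ (i : Fin k) (h : (i : ℕ) + 1 < k) (j : ℤ),
          (i, j) ∈ cellsOf k lam → ((⟨(i : ℕ) + 1, h⟩ : Fin k), j) ∈ cellsOf k lam →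
          extendDiag k lam x y ((⟨(i : ℕ) + 1, h⟩ : Fin k), j) ≤ extendDiag k lam x y (i, j)) ∧
        (∀ (i : Fin k) (j : ℤ),
          (i, j) ∈ cellsOf k lam → (i, j + 1) ∈ cellsOf k lam →
          extendDiag k lam x y (i, j + 1) ≤ extendDiag k lam x y (i, j))} with hSdef
  have hSmeas : MeasurableSet S := by
    apply IsClosed.measurableSet
    rw [hSdef]
    simp only [Set.setOf_and, Set.setOf_forall]
    repeat'
      first
      | apply IsClosed.inter
      | apply isClosed_iInter
      | intro _
    all_goals
      apply isClosed_le <;>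
        first
          | exact continuous_const
          | exact continuous_extendDiag lam x _
  set E2 := cellEquiv k lam with hE2
  set φ : ((Σ i : Fin k, Fin (n i)) → ℝ) → ({c : Fin k × ℤ // c ∈ freeCells k lam} → ℝ) :=
    ⇑(MeasurableEquiv.piCongrLeft (fun _ => ℝ) E2) with hphidef
  have hpres : MeasurePreserving φ volume volume :=
    volume_measurePreserving_piCongrLeft (fun _ => ℝ) E2
  have hphieval : ∀ (w : (Σ i : Fin k, Fin (n i)) → ℝ) (s : {c : Fin k × ℤ // c ∈ freeCells k lam}),
      φ w s = w (E2.symm s) := by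
    intro w s
    conv_lhs => rw [← Equiv.apply_symm_apply E2 s]
    rw [hphidef, MeasurableEquiv.coe_piCongrLeft]
    exact Equiv.piCongrLeft_apply_apply _ _ _ _
  have hKcast : ∀ i : Fin k, ((k - 1 - (i : ℕ) : ℕ) : ℤ) = (k : ℤ) - 1 - (i : ℕ) :=
    cast_krow k
  have hnval : ∀ i : Fin k, n i = lam i + (k - 1 - (i : ℕ)) := fun i => rfl
  have hYfree : ∀ (w : (Σ i : Fin k, Fin (n i)) → ℝ) (i : Fin k) (j : ℤ)
      (h : (i, j) ∈ freeCells k lam) (q : ℕ) (hq : q < n i),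
      (q : ℤ) = j + ((k : ℤ) - 1 - (i : ℕ)) - 1 →
      extendDiag k lam x (φ w) (i, j) = w ⟨i, ⟨q, hq⟩⟩ := by
    intro w i j h q hq he
    unfold extendDiag
    rw [dif_pos h, hphieval]
    have h3 : E2.symm ⟨(i, j), h⟩ = ⟨i, ⟨q, hq⟩⟩ := by
      rw [Equiv.symm_apply_eq]
      apply Subtype.ext
      show ((i, j) : Fin k × ℤ) = (i, (q : ℤ) + 1 - ((k : ℤ) - 1 - (i : ℕ)))
      exact congrArg (Prod.mk i) (by omega)
    rw [h3]
  have hYdiag : ∀ (w : (Σ i : Fin k, Fin (n i)) → ℝ) (c : Fin k × ℤ), c ∉ freeCells k lam →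
      extendDiag k lam x (φ w) c = x (Fin.rev c.1) := by
    intro w c h
    unfold extendDiag
    rw [dif_neg h]
  have hpre : φ ⁻¹' S = glSet k n b := by
    ext w
    simp only [Set.mem_preimage, hSdef, Set.mem_setOf_eq]
    constructor
    · rintro ⟨hA, hB, hC⟩
      refine ⟨?_, ?_, ?_, ?_, ?_⟩
      · -- g1 : nonneg
        rintro ⟨i, q⟩
        have hq := q.2
        have hKi := hKcast i
        have hni := hnval i
        have hfree : (i, (q : ℤ) + 1 - ((k : ℤ) - 1 - (i : ℕ))) ∈ freeCells k lam := by
          rw [mem_freeCells]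
          dsimp only
          omega
        have hcell : (i, (q : ℤ) + 1 - ((k : ℤ) - 1 - (i : ℕ))) ∈ cellsOf k lam := by
          rw [mem_cellsOf]
          have := mem_freeCells.mp hfree
          dsimp only at this ⊢
          omega
        have := (hA _ hcell).1
        rwa [hYfree w i _ hfree (q : ℕ) q.2 (by omega)] at this
      · -- g2 : first cell below start
        intro i h0
        have hKi := hKcast i
        have hni := hnval i
        set j0 : ℤ := -((k : ℤ) - 1 - (i : ℕ)) with hj0
        have hm1 : (i, j0) ∈ cellsOf k lam := by
          rw [mem_cellsOf]; dsimp only; omega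
        have hm2 : (i, j0 + 1) ∈ cellsOf k lam := by
          rw [mem_cellsOf]; dsimp only; omega
        have hfree : (i, j0 + 1) ∈ freeCells k lam := by
          rw [mem_freeCells]; dsimp only; omega
        have hnotfree : (i, j0) ∉ freeCells k lam := by
          rw [mem_freeCells]; dsimp only; omega
        have := hC i j0 hm1 hm2
        rwa [hYfree w i _ hfree 0 h0 (by omega), hYdiag w _ hnotfree] at this
      · -- g3 : chain decreasing
        intro i q h
        have hKi := hKcast i
        have hni := hnval i
        set j : ℤ := (q : ℤ) + 1 - ((k : ℤ) - 1 - (i : ℕ)) with hjd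
        have hf1 : (i, j) ∈ freeCells k lam := by
          rw [mem_freeCells]; dsimp only; omega
        have hf2 : (i, j + 1) ∈ freeCells k lam := by
          rw [mem_freeCells]; dsimp only; omega
        have hm1 : (i, j) ∈ cellsOf k lam := by
          rw [mem_cellsOf]; dsimp only; omega
        have hm2 : (i, j + 1) ∈ cellsOf k lam := by
          rw [mem_cellsOf]; dsimp only; omega
        have := hC i j hm1 hm2
        rwa [hYfree w i _ hf2 (q + 1) h (by push_cast; omega),
          hYfree w i _ hf1 q (Nat.lt_of_succ_lt h) (by omega)] at this
      · -- g4 : coupling with start of next row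
        intro i h h0
        have hik : i < k := Nat.lt_of_succ_lt h
        set iF : Fin k := ⟨i, hik⟩ with hiF
        set iF1 : Fin k := ⟨i + 1, h⟩ with hiF1
        have hKi := hKcast iF
        have hKi1 := hKcast iF1
        have hni := hnval iF
        have hni1 := hnval iF1
        have hvi : (iF : ℕ) = i := rfl
        have hvi1 : (iF1 : ℕ) = i + 1 := rfl
        set j : ℤ := -((k : ℤ) - 1 - ((i : ℕ) + 1)) with hjd
        have hm1 : (iF, j) ∈ cellsOf k lam := by
          rw [mem_cellsOf]; dsimp only; omega
        have hm2 : (iF1, j) ∈ cellsOf k lam := by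
          rw [mem_cellsOf]; dsimp only; omega
        have hnf : (iF1, j) ∉ freeCells k lam := by
          rw [mem_freeCells]; dsimp only; omega
        have hf : (iF, j) ∈ freeCells k lam := by
          rw [mem_freeCells]; dsimp only; omega
        have hle := hB iF h j hm1 hm2
        exact ((hYdiag w (iF1, j) hnf).symm.trans_le hle).trans_eq
          (hYfree w iF j hf 0 h0 (by omega))
      · -- g5 : coupling interior
        intro i h q h1 h2
        have hik : i < k := Nat.lt_of_succ_lt h
        set iF : Fin k := ⟨i, hik⟩ with hiF
        set iF1 : Fin k := ⟨i + 1, h⟩ with hiF1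
        have hKi := hKcast iF
        have hKi1 := hKcast iF1
        have hni := hnval iF
        have hni1 := hnval iF1
        have hvi : (iF : ℕ) = i := rfl
        have hvi1 : (iF1 : ℕ) = i + 1 := rfl
        have h1' : q + 1 < n iF := h1
        have h2' : q < n iF1 := h2
        set j : ℤ := (q : ℤ) + 1 - ((k : ℤ) - 1 - ((i : ℕ) + 1)) with hjd
        have hm1 : (iF, j) ∈ cellsOf k lam := by
          rw [mem_cellsOf]; dsimp only; omega
        have hm2 : (iF1, j) ∈ cellsOf k lam := by
          rw [mem_cellsOf]; dsimp only; omega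
        have hf1 : (iF, j) ∈ freeCells k lam := by
          rw [mem_freeCells]; dsimp only; omega
        have hf2 : (iF1, j) ∈ freeCells k lam := by
          rw [mem_freeCells]; dsimp only; omega
        have hle := hB iF h j hm1 hm2
        exact ((hYfree w iF1 j hf2 q h2' (by omega)).symm.trans_le hle).trans_eq
          (hYfree w iF j hf1 (q + 1) h1' (by push_cast; omega))
    · rintro ⟨g1, g2, g3, g4, g5⟩
      have hglmem : w ∈ glSet k n b := ⟨g1, g2, g3, g4, g5⟩
      refine ⟨?_, ?_, ?_⟩
      · -- condition A
        rintro ⟨i, j⟩ hc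
        have hm := mem_cellsOf.mp hc
        dsimp only at hm
        have hKi := hKcast i
        have hni := hnval i
        by_cases hf : (i, j) ∈ freeCells k lam
        · have hmf := mem_freeCells.mp hf
          dsimp only at hmf
          have hqlt : (j + ((k : ℤ) - 1 - (i : ℕ)) - 1).toNat < n i := by omega
          rw [hYfree w i j hf _ hqlt (by omega)]
          refine ⟨g1 _, ?_⟩
          exact le_trans (glSet_le_b hglmem i _ hqlt) (hx01 _).2
        · rw [hYdiag w (i, j) hf]
          exact ⟨(hx01 _).1, (hx01 _).2⟩
      · -- condition B
        intro i h j hm1 hm2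
        have hm1' := mem_cellsOf.mp hm1
        have hm2' := mem_cellsOf.mp hm2
        dsimp only at hm1' hm2'
        have hvi1 : ((⟨(i : ℕ) + 1, h⟩ : Fin k) : ℕ) = (i : ℕ) + 1 := rfl
        have hKi := hKcast i
        have hKi1 := hKcast ⟨(i : ℕ) + 1, h⟩
        have hni := hnval i
        have hni1 := hnval ⟨(i : ℕ) + 1, h⟩
        have hfi : (i, j) ∈ freeCells k lam := by
          rw [mem_freeCells]; dsimp only; omega
        by_cases hf1 : ((⟨(i : ℕ) + 1, h⟩ : Fin k), j) ∈ freeCells k lam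
        · have hmf1 := mem_freeCells.mp hf1
          dsimp only at hmf1
          have hplt : (j + ((k : ℤ) - 1 - ((i : ℕ) + 1)) - 1).toNat < n ⟨(i : ℕ) + 1, h⟩ := by
            omega
          have hp1lt : (j + ((k : ℤ) - 1 - ((i : ℕ) + 1)) - 1).toNat + 1 < n i := by omega
          rw [hYfree w ⟨(i : ℕ) + 1, h⟩ j hf1 _ hplt (by omega),
            hYfree w i j hfi _ hp1lt (by push_cast; omega)]
          exact g5 (i : ℕ) h _ hp1lt hplt
        · have hjeq : j = -((k : ℤ) - 1 - ((i : ℕ) + 1)) := by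
            by_contra hne
            exact hf1 (by rw [mem_freeCells]; dsimp only; omega)
          have h0' : 0 < n i := by omega
          rw [hYdiag w _ hf1, hYfree w i j hfi 0 h0' (by omega)]
          exact g4 (i : ℕ) h h0'
      · -- condition C
        intro i j hm1 hm2
        have hm1' := mem_cellsOf.mp hm1
        have hm2' := mem_cellsOf.mp hm2
        dsimp only at hm1' hm2'
        have hKi := hKcast i
        have hni := hnval i
        have hf2 : (i, j + 1) ∈ freeCells k lam := by
          rw [mem_freeCells]; dsimp only; omega
        by_cases hf1 : (i, j) ∈ freeCells k lam
        · have hmf1 := mem_freeCells.mp hf1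
          dsimp only at hmf1
          have hqlt : (j + ((k : ℤ) - 1 - (i : ℕ)) - 1).toNat < n i := by omega
          have hq1lt : (j + ((k : ℤ) - 1 - (i : ℕ)) - 1).toNat + 1 < n i := by omega
          rw [hYfree w i (j + 1) hf2 _ hq1lt (by push_cast; omega),
            hYfree w i j hf1 _ hqlt (by omega)]
          exact g3 i _ hq1lt
        · have hjeq : j = -((k : ℤ) - 1 - (i : ℕ)) := by
            by_contra hne
            exact hf1 (by rw [mem_freeCells]; dsimp only; omega)
          have h0' : 0 < n i := by omega
          rw [hYfree w i (j + 1) hf2 0 h0' (by omega), hYdiag w (i, j) hf1]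
          exact g2 i h0'
  -- conclude
  have hstrict : ∀ i j : Fin k, i < j → n j < n i := by
    intro i j hij
    have h1 := hlam i j (le_of_lt hij)
    have h2 := hnval i
    have h3 := hnval j
    have h4 := j.2
    have h5 : (i : ℕ) < (j : ℕ) := hij
    omega
  have hb0 : ∀ i, 0 ≤ b i := fun i => (hx01 _).1
  have hb1 : ∀ i, b i ≤ 1 := fun i => (hx01 _).2
  have hbmono : ∀ i j : Fin k, i ≤ j → b j ≤ b i := by
    intro i j hij
    exact hmono (Fin.rev_le_rev.mpr hij)
  have hvol : volume S = volume (glSet k n b) := by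
    rw [← hpre]
    exact (hpres.measure_preimage hSmeas.nullMeasurableSet).symm
  rw [hvol, (gl_main (∑ i, n i) k n rfl hstrict b hb0 hb1 hbmono).1]
  congr 1
  rw [one_div, inv_mul_eq_div]
  rfl
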